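/- Let p be a prime, d a positive natural number, γ ≥ 0 a real number, and a ∈ ℚ_p nonzero. If τ_1, …, τ_n is a collection of p-adic (γ, a)-equiangular lines in ℚ_p^d, then |n|² ≤ |d| · max{|n|, γ²/|a|²}, where |n| and |d| denote the p-adic absolute values of the integers n and d. -/

import Mathlib

open scoped BigOperators

noncomputable section

variable {p : ℕ} [Fact p.Prime]

/-- The bilinear form `⟨x, y⟩ = ∑ i, x i * y i` on `ℚ_p^d`. -/
def pinner {d : ℕ} (x y : Fin d → ℚ_[p]) : ℚ_[p] := ∑ i, x i * y i

/-- `⟨·, y⟩` as a linear map. -/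
def pinnerL {d : ℕ} (y : Fin d → ℚ_[p]) : (Fin d → ℚ_[p]) →ₗ[ℚ_[p]] ℚ_[p] where
  toFun x := pinner x y
  map_add' x z := by simp [pinner, add_mul, Finset.sum_add_distrib]
  map_smul' c x := by simp [pinner, Finset.mul_sum, mul_assoc]

/-- The frame operator `S_τ x = ∑ j, ⟨x, τ j⟩ • τ j`. -/
def frameOp {d n : ℕ} (τ : Fin n → Fin d → ℚ_[p]) :
    (Fin d → ℚ_[p]) →ₗ[ℚ_[p]] (Fin d → ℚ_[p]) :=
  ∑ j, (pinnerL (τ j)).smulRight (τ j)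

/-- `S_τ` is similar (through an invertible operator) to a diagonal operator with
eigenvalues `λ_1, …, λ_d` satisfying `|∑ λ_j|² ≤ |d| |∑ λ_j²|`. -/
def GoodDiagonalizable {d n : ℕ} (τ : Fin n → Fin d → ℚ_[p]) : Prop :=
  ∃ (P : (Fin d → ℚ_[p]) ≃ₗ[ℚ_[p]] (Fin d → ℚ_[p])) (lam : Fin d → ℚ_[p]),
    frameOp τ = P.toLinearMap ∘ₗ Matrix.toLin' (Matrix.diagonal lam) ∘ₗ P.symm.toLinearMap ∧
    ‖∑ j, lam j‖ ^ 2 ≤ ‖(d : ℚ_[p])‖ * ‖∑ j, lam j ^ 2‖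

/-- p-adic `γ`-equiangular lines. -/
def IsPadicEquiangular {d n : ℕ} (γ : ℝ) (τ : Fin n → Fin d → ℚ_[p]) : Prop :=
  (∀ j, pinner (τ j) (τ j) = 1) ∧
  (∀ j k, j ≠ k → ‖pinner (τ j) (τ k)‖ = γ) ∧
  GoodDiagonalizable τ

/-- p-adic `(γ, a)`-equiangular lines. -/
def IsPadicEquiangularA {d n : ℕ} (γ : ℝ) (a : ℚ_[p]) (τ : Fin n → Fin d → ℚ_[p]) : Prop :=
  (∀ j, pinner (τ j) (τ j) = a) ∧
  (∀ j k, j ≠ k → ‖pinner (τ j) (τ k)‖ = γ) ∧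
  GoodDiagonalizable τ

/-- The matrix of the frame operator in the standard basis. -/
lemma frameOp_eq_toLin' {d n : ℕ} (τ : Fin n → Fin d → ℚ_[p]) :
    frameOp τ = Matrix.toLin' ((Matrix.of τ).transpose * Matrix.of τ) := by
  apply LinearMap.ext; intro x; funext i
  simp only [frameOp, LinearMap.sum_apply, LinearMap.smulRight_apply, pinnerL, pinner,
    LinearMap.coe_mk, AddHom.coe_mk, Finset.sum_apply, Pi.smul_apply, smul_eq_mul,
    Matrix.toLin'_apply, Matrix.mulVec, dotProduct, Matrix.mul_apply,
    Matrix.transpose_apply, Matrix.of_apply]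
  simp_rw [Finset.sum_mul]
  rw [Finset.sum_comm]
  exact Finset.sum_congr rfl fun j _ => Finset.sum_congr rfl fun k _ => by ring

lemma trace_toLin' {d : ℕ} (A : Matrix (Fin d) (Fin d) ℚ_[p]) :
    LinearMap.trace ℚ_[p] (Fin d → ℚ_[p]) (Matrix.toLin' A) = A.trace := by
  rw [LinearMap.trace_eq_matrix_trace ℚ_[p] (Pi.basisFun ℚ_[p] (Fin d)),
    LinearMap.toMatrix_eq_toMatrix', LinearMap.toMatrix'_toLin']

theorem padic_vanLintSeidel_relative_bound_a {d n : ℕ} (hd : 0 < d)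
    (γ : ℝ) (hγ : 0 ≤ γ) (a : ℚ_[p]) (ha : a ≠ 0) (τ : Fin n → Fin d → ℚ_[p])
    (h : IsPadicEquiangularA γ a τ) :
    ‖(n : ℚ_[p])‖ ^ 2 ≤ ‖(d : ℚ_[p])‖ * max ‖(n : ℚ_[p])‖ (γ ^ 2 / ‖a‖ ^ 2) := by
  obtain ⟨hdiag, hoff, P, lam, hPD, hlam⟩ := h
  set A : Matrix (Fin n) (Fin d) ℚ_[p] := Matrix.of τ with hA
  set G : Matrix (Fin n) (Fin n) ℚ_[p] := A * A.transpose with hG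
  have hGdiag : ∀ j, G j j = a := by
    intro j
    simpa [hG, hA, Matrix.mul_apply, pinner] using hdiag j
  have hGoff : ∀ j k, j ≠ k → ‖G j k‖ = γ := by
    intro j k hjk
    simpa [hG, hA, Matrix.mul_apply, pinner] using hoff j k hjk
  -- trace identities
  have hframe : frameOp τ = Matrix.toLin' (A.transpose * A) := frameOp_eq_toLin' τ
  have htr1 : ∑ j, lam j = (n : ℚ_[p]) * a := by
    have h1 : LinearMap.trace ℚ_[p] (Fin d → ℚ_[p]) (frameOp τ) = ∑ j, lam j := by
      have : frameOp τ = P.conj (Matrix.toLin' (Matrix.diagonal lam)) := by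
        rw [LinearEquiv.conj_apply, LinearMap.comp_assoc]; exact hPD
      rw [this, LinearMap.trace_conj', trace_toLin', Matrix.trace_diagonal]
    have h2 : LinearMap.trace ℚ_[p] (Fin d → ℚ_[p]) (frameOp τ) = (n : ℚ_[p]) * a := by
      rw [hframe, trace_toLin', Matrix.trace_mul_comm, ← hG]
      simp only [Matrix.trace, Matrix.diag]
      rw [Finset.sum_congr rfl fun j _ => hGdiag j]
      simp [mul_comm]
    rw [← h1, h2]
  have htr2 : ∑ j, lam j ^ 2 = (G * G).trace := by
    have h1 : LinearMap.trace ℚ_[p] (Fin d → ℚ_[p]) (frameOp τ ∘ₗ frameOp τ)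
        = ∑ j, lam j ^ 2 := by
      have hcomp : frameOp τ ∘ₗ frameOp τ
          = P.conj (Matrix.toLin' (Matrix.diagonal lam) ∘ₗ Matrix.toLin' (Matrix.diagonal lam)) := by
        rw [hPD]
        apply LinearMap.ext; intro x
        simp [LinearEquiv.conj_apply, LinearMap.comp_apply, LinearEquiv.symm_apply_apply]
      rw [hcomp, LinearMap.trace_conj', ← Matrix.toLin'_mul, trace_toLin',
        Matrix.diagonal_mul_diagonal, Matrix.trace_diagonal]
      simp [sq]
    have h2 : LinearMap.trace ℚ_[p] (Fin d → ℚ_[p]) (frameOp τ ∘ₗ frameOp τ)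
        = (G * G).trace := by
      rw [hframe, ← Matrix.toLin'_mul, trace_toLin', hG]
      rw [show A.transpose * A * (A.transpose * A)
          = A.transpose * (A * A.transpose * A) from by simp only [Matrix.mul_assoc],
        Matrix.trace_mul_comm]
      simp only [Matrix.mul_assoc]
    rw [← h1, h2]
  -- norm bound on (G*G).trace
  have hGGtr : (G * G).trace = ∑ j, ∑ k, G j k * G k j := by
    simp [Matrix.trace, Matrix.diag, Matrix.mul_apply]
  have hsplit : (G * G).trace = (n : ℚ_[p]) * (a * a)
      + ∑ j, ∑ k ∈ Finset.univ.erase j, G j k * G k j := by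
    rw [hGGtr]
    have : ∀ j : Fin n, ∑ k, G j k * G k j
        = a * a + ∑ k ∈ Finset.univ.erase j, G j k * G k j := by
      intro j
      rw [← Finset.add_sum_erase _ _ (Finset.mem_univ j), hGdiag j]
    rw [Finset.sum_congr rfl fun j _ => this j, Finset.sum_add_distrib]
    simp [mul_comm, Finset.sum_const, nsmul_eq_mul]
  have hoffbound : ‖∑ j, ∑ k ∈ Finset.univ.erase j, G j k * G k j‖ ≤ γ ^ 2 := by
    apply IsUltrametricDist.norm_sum_le_of_forall_le_of_nonneg (by positivity)
    intro j _
    apply IsUltrametricDist.norm_sum_le_of_forall_le_of_nonneg (by positivity)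
    intro k hk
    have hkj : k ≠ j := by simpa using (Finset.mem_erase.mp hk).1
    rw [norm_mul, hGoff j k (Ne.symm hkj), hGoff k j hkj, sq]
  have hTrBound : ‖(G * G).trace‖ ≤ max (‖(n : ℚ_[p])‖ * ‖a‖ ^ 2) (γ ^ 2) := by
    rw [hsplit]
    refine (Padic.nonarchimedean _ _).trans (max_le_max ?_ hoffbound)
    rw [norm_mul, norm_mul, ← sq]
  -- put everything together
  have key : ‖(n : ℚ_[p])‖ ^ 2 * ‖a‖ ^ 2
      ≤ ‖(d : ℚ_[p])‖ * max (‖(n : ℚ_[p])‖ * ‖a‖ ^ 2) (γ ^ 2) := by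
    calc ‖(n : ℚ_[p])‖ ^ 2 * ‖a‖ ^ 2 = ‖∑ j, lam j‖ ^ 2 := by
          rw [htr1, norm_mul]; ring
      _ ≤ ‖(d : ℚ_[p])‖ * ‖∑ j, lam j ^ 2‖ := hlam
      _ = ‖(d : ℚ_[p])‖ * ‖(G * G).trace‖ := by rw [htr2]
      _ ≤ ‖(d : ℚ_[p])‖ * max (‖(n : ℚ_[p])‖ * ‖a‖ ^ 2) (γ ^ 2) := by
          exact mul_le_mul_of_nonneg_left hTrBound (norm_nonneg _)
  have hA2 : (0 : ℝ) < ‖a‖ ^ 2 := pow_pos (norm_pos_iff.mpr ha) 2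
  rw [← mul_le_mul_iff_of_pos_right hA2]
  calc ‖(n : ℚ_[p])‖ ^ 2 * ‖a‖ ^ 2
      ≤ ‖(d : ℚ_[p])‖ * max (‖(n : ℚ_[p])‖ * ‖a‖ ^ 2) (γ ^ 2) := key
    _ = ‖(d : ℚ_[p])‖ * max ‖(n : ℚ_[p])‖ (γ ^ 2 / ‖a‖ ^ 2) * ‖a‖ ^ 2 := by
        rw [mul_assoc]
        congr 1
        rw [max_mul_of_nonneg _ _ (le_of_lt hA2)]
        congr 1
        field_simp

end
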